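/- (Proposition 3.3.) Let ζ_c ∈ ℂ with ζ_c ≠ δ_j for all j = 1,…,d, and let λ ∈ ℂ be such that λ ≠ δ_j for all j and |λ − ζ_c| < |δ_j − ζ_c| for all j = φ+1,…,d. For a nonnegative integer ψ define the truncation error R_ψ(λ) = (I − V_φ V̂_φ^H M_B) B(λ)^{-1} − Σ_{k=0}^{ψ} B̃(ζ_c) [(λ − ζ_c) M_B B̃(ζ_c)]^k. Then R_ψ(λ) = Σ_{j=φ+1}^{d} ( Σ_{k=ψ+1}^{∞} (λ − ζ_c)^k / (δ_j − ζ_c)^{k+1} ) v^{(j)} (v̂^{(j)})^H, where each inner series converges absolutely. -/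

import Mathlib

open Matrix BigOperators

private lemma geom_tail (x a : ℂ) (hx : ‖x‖ < ‖a‖) (ψ : ℕ) :
    Summable (fun k : ℕ => ‖x ^ (k + ψ + 1) / a ^ (k + ψ + 2)‖) ∧
    (a - x)⁻¹ - ∑ k ∈ Finset.range (ψ + 1), x ^ k / a ^ (k + 1)
      = ∑' k : ℕ, x ^ (k + ψ + 1) / a ^ (k + ψ + 2) := by
  have ha : a ≠ 0 := by
    intro h
    rw [h, norm_zero] at hx
    exact (norm_nonneg x).not_gt hx
  have hr : ‖x / a‖ < 1 := by
    rw [norm_div, div_lt_one (by simpa using (norm_nonneg x).trans_lt hx)]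
    simpa using hx
  have key : ∀ k : ℕ, x ^ (k + ψ + 1) / a ^ (k + ψ + 2)
      = (x ^ (ψ + 1) / a ^ (ψ + 2)) * (x / a) ^ k := fun k => by
    rw [div_pow]
    field_simp
    ring
  have hs : Summable (fun k : ℕ => ‖x ^ (k + ψ + 1) / a ^ (k + ψ + 2)‖) := by
    simp only [key, norm_mul, norm_pow]
    exact (summable_geometric_of_lt_one (norm_nonneg _) hr).mul_left _
  refine ⟨hs, ?_⟩
  have ht : ∑' k : ℕ, x ^ (k + ψ + 1) / a ^ (k + ψ + 2)
      = x ^ (ψ + 1) / a ^ (ψ + 2) * (1 - x / a)⁻¹ := by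
    simp only [key]
    rw [tsum_mul_left, tsum_geometric_of_norm_lt_one hr]
  have hax : a - x ≠ 0 := by
    intro h
    rw [sub_eq_zero] at h
    rw [h] at hx
    exact lt_irrefl _ hx
  have hone : x / a ≠ 1 := by
    intro h
    rw [div_eq_one_iff_eq ha] at h
    rw [h] at hx
    exact lt_irrefl _ hx
  rw [ht]
  have hsum : ∑ k ∈ Finset.range (ψ + 1), x ^ k / a ^ (k + 1)
      = ((x / a) ^ (ψ + 1) - 1) / (x / a - 1) * a⁻¹ := by
    rw [← geom_sum_eq hone, Finset.sum_mul]
    refine Finset.sum_congr rfl fun k _ => ?_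
    rw [div_pow]
    field_simp
    try ring
    try tauto
  rw [hsum]
  have h1 : (1 : ℂ) - x / a ≠ 0 := by
    intro h
    apply hone
    linear_combination -h
  have h2 : x / a - 1 ≠ 0 := sub_ne_zero.mpr hone
  set r := x / a with hrdef
  have hxr : x = r * a := by
    rw [hrdef]; field_simp
  have hfac : a - x = a * (1 - r) := by rw [hxr]; ring
  rw [hfac, hxr, mul_pow]
  field_simp
  ring

/-- (Proposition 3.3.) The truncation error
`R_ψ(λ) = (I - V_φ V̂_φᴴ M_B) B(λ)⁻¹ - ∑_{k=0}^{ψ} B̃(ζ_c) [(λ - ζ_c) M_B B̃(ζ_c)]^k`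
equals `∑_{j > φ} (∑_{k=ψ+1}^{∞} (λ - ζ_c)^k / (δ_j - ζ_c)^(k+1)) v⁽ʲ⁾ (v̂⁽ʲ⁾)ᴴ`,
where each inner series converges absolutely. -/
theorem stmt_16 {d : ℕ}
    (B MB V Vh : Matrix (Fin d) (Fin d) ℂ) (δ : Fin d → ℂ)
    (hMB : IsUnit MB)
    (hbi : Vhᴴ * MB * V = 1)
    (hright : ∀ j, B *ᵥ (fun a => V a j) = δ j • (MB *ᵥ (fun a => V a j)))
    (hleft : ∀ j, (fun a => star (Vh a j)) ᵥ* B = δ j • ((fun a => star (Vh a j)) ᵥ* MB))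
    (φ : ℕ) (hφ1 : 1 ≤ φ) (hφd : φ ≤ d)
    (Vφ Vhφ : Matrix (Fin d) (Fin φ) ℂ)
    (hVφ : Vφ = V.submatrix id (Fin.castLE hφd))
    (hVhφ : Vhφ = Vh.submatrix id (Fin.castLE hφd))
    (ζc lam : ℂ)
    (hζc : ∀ j, ζc ≠ δ j)
    (hlam : ∀ j, lam ≠ δ j)
    (hin : ∀ j : Fin d, φ ≤ (j : ℕ) → ‖lam - ζc‖ < ‖δ j - ζc‖)
    (ψ : ℕ)
    (Bt Rψ : Matrix (Fin d) (Fin d) ℂ)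
    (hBt : Bt = (1 - Vφ * Vhφᴴ * MB) * (B - ζc • MB)⁻¹)
    (hR : Rψ = (1 - Vφ * Vhφᴴ * MB) * (B - lam • MB)⁻¹ -
      ∑ k ∈ Finset.range (ψ + 1), Bt * ((lam - ζc) • (MB * Bt)) ^ k) :
    (∀ j : Fin d, φ ≤ (j : ℕ) →
        Summable (fun k : ℕ => ‖(lam - ζc) ^ (k + ψ + 1) / (δ j - ζc) ^ (k + ψ + 2)‖)) ∧
      Rψ = ∑ j ∈ Finset.univ.filter (fun j : Fin d => φ ≤ (j : ℕ)),
        (∑' k : ℕ, (lam - ζc) ^ (k + ψ + 1) / (δ j - ζc) ^ (k + ψ + 2)) •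
          Matrix.vecMulVec (fun a => V a j) (fun b => star (Vh b j)) := by
  have hWV : (Vhᴴ * MB) * V = 1 := by rw [Matrix.mul_assoc] at hbi ⊢; exact hbi
  have hVW : V * (Vhᴴ * MB) = 1 := mul_eq_one_comm.mp hWV
  have hBV : B * V = MB * V * Matrix.diagonal δ := by
    ext a j
    rw [Matrix.mul_diagonal]
    simp only [Matrix.mul_apply]
    have h := congrFun (hright j) a
    simp only [Matrix.mulVec, dotProduct, Pi.smul_apply, smul_eq_mul] at h
    exact h.trans (mul_comm _ _)
  have hMBid : MB * V * (Vhᴴ * MB) = MB := by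
    rw [Matrix.mul_assoc, hVW, Matrix.mul_one]
  have hB : B = MB * V * Matrix.diagonal δ * (Vhᴴ * MB) := by
    calc B = B * (V * (Vhᴴ * MB)) := by rw [hVW, Matrix.mul_one]
    _ = B * V * (Vhᴴ * MB) := by rw [Matrix.mul_assoc]
    _ = _ := by rw [hBV]
  have hMBVVh : MB * (V * Vhᴴ) = 1 := by
    apply mul_eq_one_comm.mp
    calc V * Vhᴴ * MB = V * (Vhᴴ * MB) := by rw [Matrix.mul_assoc]
    _ = 1 := hVW
  have hinv : ∀ μ : ℂ, (∀ j, μ ≠ δ j) →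
      (B - μ • MB)⁻¹ = V * Matrix.diagonal (fun j => (δ j - μ)⁻¹) * Vhᴴ := by
    intro μ hμ
    apply Matrix.inv_eq_right_inv
    have hd : Matrix.diagonal δ - μ • (1 : Matrix (Fin d) (Fin d) ℂ)
        = Matrix.diagonal (fun j => δ j - μ) := by
      ext i j
      by_cases h : i = j <;> simp [Matrix.diagonal, Matrix.one_apply, h]
    have h1 : B - μ • MB = MB * V * Matrix.diagonal (fun j => δ j - μ) * (Vhᴴ * MB) := by
      rw [← hd, Matrix.mul_sub, Matrix.sub_mul, hB, Matrix.mul_smul, Matrix.smul_mul,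
        Matrix.mul_one, hMBid]
    rw [h1]
    have hfn : (fun j => (δ j - μ) * (δ j - μ)⁻¹) = fun _ : Fin d => (1:ℂ) :=
      funext fun j => mul_inv_cancel₀ (sub_ne_zero.mpr (hμ j).symm)
    have hdd : Matrix.diagonal (fun j => δ j - μ) * Matrix.diagonal (fun j => (δ j - μ)⁻¹)
        = (1 : Matrix (Fin d) (Fin d) ℂ) := by
      rw [Matrix.diagonal_mul_diagonal, hfn, Matrix.diagonal_one]
    calc MB * V * Matrix.diagonal (fun j => δ j - μ) * (Vhᴴ * MB) *
          (V * Matrix.diagonal (fun j => (δ j - μ)⁻¹) * Vhᴴ)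
        = MB * V * (Matrix.diagonal (fun j => δ j - μ) * ((Vhᴴ * MB) * V) *
            (Matrix.diagonal (fun j => (δ j - μ)⁻¹) * Vhᴴ)) := by
          simp only [Matrix.mul_assoc]
    _ = MB * (V * Vhᴴ) := by
          rw [hWV, Matrix.mul_one, ← Matrix.mul_assoc (Matrix.diagonal fun j => δ j - μ), hdd,
            Matrix.one_mul, Matrix.mul_assoc]
    _ = 1 := hMBVVh
  have hmul : ∀ (f g : Fin d → ℂ),
      (V * Matrix.diagonal f * (Vhᴴ * MB)) * (V * Matrix.diagonal g * Vhᴴ)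
        = V * Matrix.diagonal (fun j => f j * g j) * Vhᴴ := by
    intro f g
    calc (V * Matrix.diagonal f * (Vhᴴ * MB)) * (V * Matrix.diagonal g * Vhᴴ)
        = V * (Matrix.diagonal f * ((Vhᴴ * MB) * V) * (Matrix.diagonal g * Vhᴴ)) := by
          simp only [Matrix.mul_assoc]
    _ = V * (Matrix.diagonal f * Matrix.diagonal g * Vhᴴ) := by
          rw [hWV, Matrix.mul_one, Matrix.mul_assoc]
    _ = _ := by rw [Matrix.diagonal_mul_diagonal, Matrix.mul_assoc]
  have hmul2 : ∀ (f g : Fin d → ℂ),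
      (V * Matrix.diagonal f * Vhᴴ) * (MB * (V * Matrix.diagonal g * Vhᴴ))
        = V * Matrix.diagonal (fun j => f j * g j) * Vhᴴ := by
    intro f g
    calc (V * Matrix.diagonal f * Vhᴴ) * (MB * (V * Matrix.diagonal g * Vhᴴ))
        = V * Matrix.diagonal f * ((Vhᴴ * MB) * V) * (Matrix.diagonal g * Vhᴴ) := by
          simp only [Matrix.mul_assoc]
    _ = V * (Matrix.diagonal f * Matrix.diagonal g * Vhᴴ) := by
          rw [hWV, Matrix.mul_one, Matrix.mul_assoc, Matrix.mul_assoc]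
    _ = _ := by rw [Matrix.diagonal_mul_diagonal, Matrix.mul_assoc]
  have hreindex : ∀ (c : Fin d → ℂ),
      ∑ i : Fin φ, c (Fin.castLE hφd i)
        = ∑ j ∈ Finset.univ.filter (fun j : Fin d => ((j:ℕ) < φ)), c j := by
    intro c
    rw [← Finset.sum_image (g := Fin.castLE hφd) (f := c)
      (fun x _ y _ h => Fin.castLE_injective hφd h)]
    congr 1
    ext j
    simp only [Finset.mem_image, Finset.mem_filter, Finset.mem_univ, true_and]
    constructor
    · rintro ⟨i, rfl⟩
      exact i.isLt
    · intro hj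
      exact ⟨⟨(j:ℕ), hj⟩, by ext; simp⟩
  have hVphi : Vφ * Vhφᴴ
      = V * Matrix.diagonal (fun j : Fin d => if (j:ℕ) < φ then (1:ℂ) else 0) * Vhᴴ := by
    ext a b
    have h1 : (V * Matrix.diagonal (fun j : Fin d => if (j:ℕ) < φ then (1:ℂ) else 0) * Vhᴴ) a b
        = ∑ j ∈ Finset.univ.filter (fun j : Fin d => ((j:ℕ) < φ)),
            V a j * star (Vh b j) := by
      rw [Matrix.mul_apply, Finset.sum_filter]
      refine Finset.sum_congr rfl fun j _ => ?_
      rw [Matrix.mul_diagonal, Matrix.conjTranspose_apply]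
      split_ifs <;> simp
    rw [h1, ← hreindex (fun j => V a j * star (Vh b j))]
    rw [Matrix.mul_apply]
    refine Finset.sum_congr rfl fun i _ => ?_
    rw [hVφ, hVhφ, Matrix.conjTranspose_apply, Matrix.submatrix_apply, Matrix.submatrix_apply,
      id_eq, id_eq]
  have hsum2 : ∀ (c : Fin d → ℂ),
      ∑ j ∈ Finset.univ.filter (fun j : Fin d => φ ≤ (j:ℕ)),
        c j • Matrix.vecMulVec (fun a => V a j) (fun b => star (Vh b j))
      = V * Matrix.diagonal (fun j : Fin d => if φ ≤ (j:ℕ) then c j else 0) * Vhᴴ := by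
    intro c
    ext a b
    rw [Matrix.sum_apply]
    have h1 : (V * Matrix.diagonal (fun j : Fin d => if φ ≤ (j:ℕ) then c j else 0) * Vhᴴ) a b
        = ∑ j ∈ Finset.univ.filter (fun j : Fin d => φ ≤ (j:ℕ)),
            c j * (V a j * star (Vh b j)) := by
      rw [Matrix.mul_apply, Finset.sum_filter]
      refine Finset.sum_congr rfl fun j _ => ?_
      rw [Matrix.mul_diagonal, Matrix.conjTranspose_apply]
      split_ifs <;> simp <;> ring
    rw [h1]
    refine Finset.sum_congr rfl fun j _ => ?_
    rw [Matrix.smul_apply, Matrix.vecMulVec_apply, smul_eq_mul]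
  set e : Fin d → ℂ := fun j => if φ ≤ (j:ℕ) then 1 else 0 with he
  have hP : (1 : Matrix (Fin d) (Fin d) ℂ) - Vφ * Vhφᴴ * MB
      = V * Matrix.diagonal e * (Vhᴴ * MB) := by
    have hd' : Matrix.diagonal (fun j : Fin d => if (j:ℕ) < φ then (1:ℂ) else 0)
        = 1 - Matrix.diagonal e := by
      ext i j
      by_cases h : i = j
      · subst h
        simp only [Matrix.diagonal_apply_eq, Matrix.sub_apply, Matrix.one_apply_eq, he]
        by_cases h2 : (i:ℕ) < φ
        · rw [if_pos h2, if_neg (by omega)]; ring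
        · rw [if_neg h2, if_pos (by omega)]; ring
      · simp [Matrix.diagonal, Matrix.one_apply, h]
    have hVVhMB : V * Vhᴴ * MB = 1 := by rw [Matrix.mul_assoc]; exact hVW
    rw [hVphi, hd']
    calc (1 : Matrix (Fin d) (Fin d) ℂ)
          - V * (1 - Matrix.diagonal e) * Vhᴴ * MB
        = 1 - (V * Vhᴴ * MB - V * Matrix.diagonal e * Vhᴴ * MB) := by
          rw [Matrix.mul_sub, Matrix.mul_one, Matrix.sub_mul, Matrix.sub_mul]
    _ = 1 - (1 - V * Matrix.diagonal e * Vhᴴ * MB) := by rw [hVVhMB]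
    _ = V * Matrix.diagonal e * (Vhᴴ * MB) := by rw [sub_sub_cancel, Matrix.mul_assoc]
  have hBtd : Bt = V * Matrix.diagonal (fun j => e j * (δ j - ζc)⁻¹) * Vhᴴ := by
    rw [hBt, hP, hinv ζc hζc, hmul]
  have hterm : ∀ k : ℕ, Bt * ((lam - ζc) • (MB * Bt)) ^ k
      = (lam - ζc) ^ k •
        (V * Matrix.diagonal (fun j => (e j * (δ j - ζc)⁻¹) ^ (k+1)) * Vhᴴ) := by
    intro k
    induction k with
    | zero => simpa [pow_one] using hBtd
    | succ k ih =>
      rw [pow_succ, ← Matrix.mul_assoc, ih, Matrix.smul_mul, Matrix.mul_smul, smul_smul]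
      have hfn2 : (fun j => (e j * (δ j - ζc)⁻¹) ^ (k + 1) * (e j * (δ j - ζc)⁻¹))
          = fun j => (e j * (δ j - ζc)⁻¹) ^ (k + 1 + 1) := funext fun j => (pow_succ _ _).symm
      rw [hBtd, hmul2, hfn2, ← pow_succ]
  have happ : ∀ (h : Fin d → ℂ) (a b : Fin d), (V * Matrix.diagonal h * Vhᴴ) a b
      = ∑ j, V a j * h j * star (Vh b j) := by
    intro h a b
    rw [Matrix.mul_apply]
    refine Finset.sum_congr rfl fun j _ => ?_
    rw [Matrix.mul_diagonal, Matrix.conjTranspose_apply]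
  constructor
  · intro j hj
    exact (geom_tail (lam - ζc) (δ j - ζc) (hin j hj) ψ).1
  · have hq : ∀ j : Fin d,
        e j * (δ j - lam)⁻¹
          - ∑ k ∈ Finset.range (ψ+1), (lam - ζc)^k * (e j * (δ j - ζc)⁻¹)^(k+1)
        = if φ ≤ (j:ℕ) then (∑' k : ℕ, (lam - ζc)^(k+ψ+1)/(δ j - ζc)^(k+ψ+2)) else 0 := by
      intro j
      by_cases hj : φ ≤ (j:ℕ)
      · have hej : e j = 1 := by simp [he, hj]
        rw [if_pos hj, hej, one_mul]
        have hgt := (geom_tail (lam - ζc) (δ j - ζc) (hin j hj) ψ).2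
        have hsub : δ j - ζc - (lam - ζc) = δ j - lam := by ring
        rw [hsub] at hgt
        rw [← hgt]
        congr 1
        refine Finset.sum_congr rfl fun k _ => ?_
        rw [one_mul, inv_pow, ← div_eq_mul_inv]
      · have hej : e j = 0 := by simp [he, hj]
        rw [if_neg hj, hej, zero_mul, zero_sub, neg_eq_zero]
        refine Finset.sum_eq_zero fun k _ => ?_
        rw [zero_mul, zero_pow (Nat.succ_ne_zero k), mul_zero]
    rw [hsum2, hR, hP, hinv lam hlam, hmul]
    have hsum3 : ∑ k ∈ Finset.range (ψ+1), Bt * ((lam - ζc) • (MB * Bt)) ^ k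
        = V * Matrix.diagonal (fun j => ∑ k ∈ Finset.range (ψ+1),
            (lam - ζc)^k * (e j * (δ j - ζc)⁻¹)^(k+1)) * Vhᴴ := by
      rw [Finset.sum_congr rfl fun k _ => hterm k]
      ext a b
      rw [Matrix.sum_apply, happ]
      simp only [Matrix.smul_apply, happ, smul_eq_mul, Finset.mul_sum]
      rw [Finset.sum_comm]
      refine Finset.sum_congr rfl fun j _ => ?_
      rw [Finset.sum_mul]
      refine Finset.sum_congr rfl fun k _ => ?_
      ring
    rw [hsum3]
    ext a b
    rw [Matrix.sub_apply, happ, happ, happ, ← Finset.sum_sub_distrib]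
    refine Finset.sum_congr rfl fun j _ => ?_
    rw [← hq j]
    ring
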